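/- Let T be a finite rooted out-tree (arborescence) on a set of vertices, each vertex v carrying an open real interval I_v and a point ŵ_v ∈ I_v, where every edge (u,v) of T satisfies ŵ_u ∈ I_v. Suppose additionally there is a vertex m in T, a descendant of the root r, with ŵ_m ∈ I_r. Then the vertex set of T can be partitioned into sets of size at least 2 such that each set is a clique in the interval intersection graph (i.e., the intervals in each set pairwise intersect). -/
import Mathlib
open Classical

def Sfuel {V : Type*} (parent : V → V) (r : V) (Pf : Finset V) : ℕ → V → Prop
  | 0, _ => False
  | (k+1), v => ∃ c : V, parent c = v ∧ c ≠ r ∧ c ∉ Pf ∧ ¬ Sfuel parent r Pf k c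

lemma Sfuel_stable {V : Type*} (parent : V → V) (r : V) (Pf : Finset V)
    (dep : V → ℕ) (N : ℕ)
    (hdep : ∀ c, c ≠ r → dep c = dep (parent c) + 1)
    (hN : ∀ v, dep v < N) :
    ∀ K v, N - dep v = K → ∀ t1 t2, K ≤ t1 → K ≤ t2 →
      (Sfuel parent r Pf t1 v ↔ Sfuel parent r Pf t2 v) := by
  intro K
  induction K using Nat.strong_induction_on with
  | _ K ih =>
    intro v hK t1 t2 h1 h2
    have hKpos : 0 < K := by have := hN v; omega
    obtain ⟨s1, rfl⟩ : ∃ s, t1 = s + 1 := ⟨t1 - 1, by omega⟩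
    obtain ⟨s2, rfl⟩ : ∃ s, t2 = s + 1 := ⟨t2 - 1, by omega⟩
    simp only [Sfuel]
    constructor
    · rintro ⟨c, h1c, h2c, h3c, h4c⟩
      refine ⟨c, h1c, h2c, h3c, fun hs => h4c ?_⟩
      have hdc : dep c = dep v + 1 := by rw [hdep c h2c, h1c]
      have : N - dep c = K - 1 := by omega
      exact (ih (K-1) (by omega) c this s1 s2 (by omega) (by omega)).mpr hs
    · rintro ⟨c, h1c, h2c, h3c, h4c⟩
      refine ⟨c, h1c, h2c, h3c, fun hs => h4c ?_⟩
      have hdc : dep c = dep v + 1 := by rw [hdep c h2c, h1c]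
      have : N - dep c = K - 1 := by omega
      exact (ih (K-1) (by omega) c this s1 s2 (by omega) (by omega)).mp hs

lemma Sfuel_iff {V : Type*} (parent : V → V) (r : V) (Pf : Finset V)
    (dep : V → ℕ) (N : ℕ)
    (hdep : ∀ c, c ≠ r → dep c = dep (parent c) + 1)
    (hN : ∀ v, dep v < N) (v : V) :
    Sfuel parent r Pf N v ↔
      ∃ c : V, parent c = v ∧ c ≠ r ∧ c ∉ Pf ∧ ¬ Sfuel parent r Pf N c := by
  have h := Sfuel_stable parent r Pf dep N hdep hN (N - dep v) v rfl N (N+1)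
    (by omega) (by omega)
  rw [h]
  simp only [Sfuel]

lemma assemble {V : Type*} [Fintype V] [DecidableEq V] (L U : V → ℝ) (f : V → ℝ)
    (hf1 : ∀ v, f v ∈ Set.Ioo (L v) (U v))
    (hf2 : ∀ v, ∃ w, w ≠ v ∧ f w = f v) :
    ∃ C : Finset (Finset V),
      (C : Set (Finset V)).PairwiseDisjoint id ∧
      C.biUnion id = Finset.univ ∧
      ∀ c ∈ C, 2 ≤ c.card ∧
        ∀ u ∈ c, ∀ v ∈ c, u ≠ v →
          (Set.Ioo (L u) (U u) ∩ Set.Ioo (L v) (U v)).Nonempty := by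
  classical
  refine ⟨(Finset.univ.image f).image
    (fun x => Finset.univ.filter (fun v => f v = x)), ?_, ?_, ?_⟩
  · intro c1 hc1 c2 hc2 hne
    simp only [Finset.coe_image, Set.mem_image] at hc1 hc2
    obtain ⟨x1, _, rfl⟩ := hc1
    obtain ⟨x2, _, rfl⟩ := hc2
    have hx : x1 ≠ x2 := by
      intro h; exact hne (by rw [h])
    simp only [id, Finset.disjoint_left]
    intro a ha1 ha2
    simp only [Finset.mem_filter] at ha1 ha2
    exact hx (ha1.2 ▸ ha2.2)
  · ext v
    simp only [Finset.mem_biUnion, Finset.mem_univ, iff_true, id]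
    refine ⟨Finset.univ.filter (fun w => f w = f v), ?_, ?_⟩
    · exact Finset.mem_image_of_mem _ (Finset.mem_image_of_mem _ (Finset.mem_univ v))
    · simp
  · intro c hc
    simp only [Finset.mem_image] at hc
    obtain ⟨x, hx, rfl⟩ := hc
    obtain ⟨v0, _, rfl⟩ := hx
    obtain ⟨w, hwne, hfw⟩ := hf2 v0
    constructor
    · refine Finset.one_lt_card.mpr ?_
      exact ⟨v0, by simp, w, by simp [hfw], hwne.symm⟩
    · intro a ha b hb hab
      simp only [Finset.mem_filter] at ha hb
      refine ⟨f v0, ?_, ?_⟩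
      · have := hf1 a; rwa [ha.2] at this
      · have := hf1 b; rwa [hb.2] at this

theorem stmt7 {V : Type*} [Fintype V] [DecidableEq V]
    (L U pw : V → ℝ) (hpw : ∀ v : V, pw v ∈ Set.Ioo (L v) (U v))
    (r : V) (parent : V → V) (hroot : parent r = r)
    (htree : ∀ v : V, ∃ n : ℕ, parent^[n] v = r)
    (hedge : ∀ v : V, v ≠ r → pw (parent v) ∈ Set.Ioo (L v) (U v))
    (m : V) (hm : m ≠ r) (hmr : pw m ∈ Set.Ioo (L r) (U r)) :
    ∃ C : Finset (Finset V),
      (C : Set (Finset V)).PairwiseDisjoint id ∧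
      C.biUnion id = Finset.univ ∧
      ∀ c ∈ C, 2 ≤ c.card ∧
        ∀ u ∈ c, ∀ v ∈ c, u ≠ v →
          (Set.Ioo (L u) (U u) ∩ Set.Ioo (L v) (U v)).Nonempty := by
  classical
  -- depth function
  set dep : V → ℕ := fun v => Nat.find (htree v) with hdep_def
  have hdspec : ∀ v, parent^[dep v] v = r := fun v => Nat.find_spec (htree v)
  have hdep_r : dep r = 0 := by
    rw [hdep_def]
    exact Nat.find_eq_zero _ |>.mpr rfl
  have hdep_zero : ∀ v, dep v = 0 → v = r := by
    intro v hv
    have := hdspec v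
    rwa [hv] at this
  have hdep_ne : ∀ v, v ≠ r → dep v = dep (parent v) + 1 := by
    intro v hv
    have hpos : 0 < dep v := by
      rcases Nat.eq_zero_or_pos (dep v) with h | h
      · exact absurd (hdep_zero v h) hv
      · exact h
    have h1 : dep (parent v) ≤ dep v - 1 := by
      apply Nat.find_min'
      have := hdspec v
      rw [show dep v = (dep v - 1) + 1 by omega, Function.iterate_succ_apply] at this
      exact this
    have h2 : dep v ≤ dep (parent v) + 1 := by
      apply Nat.find_min'
      rw [Function.iterate_succ_apply]
      exact hdspec (parent v)
    omega
  have hparent_fix : ∀ v, parent v = v → v = r := by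
    intro v hv
    by_contra hne
    have := hdep_ne v hne
    rw [hv] at this
    omega
  have hiter : ∀ (v : V) (i : ℕ), i ≤ dep v → dep (parent^[i] v) = dep v - i := by
    intro v i
    induction i with
    | zero => simp
    | succ i ihi =>
      intro hi
      have h1 : dep (parent^[i] v) = dep v - i := ihi (by omega)
      have hne : parent^[i] v ≠ r := by
        intro h
        rw [h, hdep_r] at h1
        omega
      rw [Function.iterate_succ_apply', ← Nat.sub_sub]
      have := hdep_ne _ hne
      omega
  have hcard : ∀ v, dep v < Fintype.card V := by
    intro v
    have hinj : Function.Injective (fun i : Fin (dep v + 1) => parent^[(i : ℕ)] v) := by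
      intro i j hij
      have hi := hiter v i (by omega)
      have hj := hiter v j (by omega)
      simp only at hij
      rw [hij] at hi
      rw [hi] at hj
      have : (i : ℕ) = (j : ℕ) := by omega
      exact Fin.ext this
    have := Fintype.card_le_of_injective _ hinj
    simp at this
    omega
  -- the cycle
  set n : ℕ := dep m + 1 with hn_def
  have hn2 : 2 ≤ n := by
    have : 0 < dep m := by
      rcases Nat.eq_zero_or_pos (dep m) with h | h
      · exact absurd (hdep_zero m h) hm
      · exact h
    omega
  set p : ℕ → V := fun i => parent^[i % n] m with hp_def
  have hp_congr : ∀ a b, a % n = b % n → p a = p b := by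
    intro a b h
    simp only [hp_def, h]
  set Pf : Finset V := (Finset.range n).image p with hPf_def
  have hp_mem : ∀ i, p i ∈ Pf := by
    intro i
    rw [hPf_def]
    refine Finset.mem_image.mpr ⟨i % n, Finset.mem_range.mpr (Nat.mod_lt _ (by omega)), ?_⟩
    exact hp_congr _ _ (Nat.mod_mod_of_dvd _ dvd_rfl) |>.symm ▸ rfl
  have hdep_p : ∀ i, dep (p i) = dep m - i % n := by
    intro i
    exact hiter m (i % n) (by have := Nat.mod_lt i (show 0 < n by omega); omega)
  have hp0 : p 0 = m := by
    simp [hp_def, Nat.mod_eq_of_lt (show 0 < n by omega)]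
  have hpdm : p (dep m) = r := by
    have : dep m % n = dep m := Nat.mod_eq_of_lt (by omega)
    simp only [hp_def, this]
    exact hdspec m
  have hr_mem : r ∈ Pf := hpdm ▸ hp_mem (dep m)
  have hp_inj : ∀ a b, p a = p b → a % n = b % n := by
    intro a b h
    have ha := hdep_p a
    have hb := hdep_p b
    rw [h] at ha
    have ha' : a % n < n := Nat.mod_lt _ (by omega)
    have hb' : b % n < n := Nat.mod_lt _ (by omega)
    omega
  have hp_parent : ∀ i, i % n < dep m → p (i + 1) = parent (p i) := by
    intro i hi
    have h1 : (i + 1) % n = i % n + 1 := by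
      have h1n : 1 % n = 1 := Nat.mod_eq_of_lt (by omega)
      have h2 : i % n + 1 < n := by
        generalize hgen : i % n = k at hi ⊢
        omega
      calc (i + 1) % n = (i % n + 1 % n) % n := Nat.add_mod i 1 n
        _ = (i % n + 1) % n := by rw [h1n]
        _ = i % n + 1 := Nat.mod_eq_of_lt h2
    simp only [hp_def, h1]
    exact Function.iterate_succ_apply' parent _ m
  have hp_edge : ∀ i, pw (p (i + 1)) ∈ Set.Ioo (L (p i)) (U (p i)) := by
    intro i
    rcases Nat.lt_or_ge (i % n) (dep m) with hlt | hge
    · rw [hp_parent i hlt]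
      apply hedge
      intro h
      have := hdep_p i
      rw [h, hdep_r] at this
      omega
    · have heq : i % n = dep m := by
        have := Nat.mod_lt i (show 0 < n by omega)
        omega
      have hpi : p i = r := by
        rw [← hpdm]
        apply hp_congr
        rw [heq, Nat.mod_eq_of_lt (by omega)]
      have hpi1 : p (i + 1) = m := by
        rw [← hp0]
        apply hp_congr
        have : (i + 1) % n = 0 := by
          have h1n : 1 % n = 1 := Nat.mod_eq_of_lt (by omega)
          have h2 : (i + 1) % n = (i % n + 1) % n := by
            rw [Nat.add_mod, h1n]
          rw [h2, heq, hn_def]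
          simp
        rw [this]
        simp
      rw [hpi, hpi1]
      exact hmr
  -- the S predicate
  set N : ℕ := Fintype.card V with hN_def
  set S : V → Prop := Sfuel parent r Pf N with hS_def
  have hS_iff : ∀ v, S v ↔ ∃ c : V, parent c = v ∧ c ≠ r ∧ c ∉ Pf ∧ ¬ S c := by
    intro v
    exact Sfuel_iff parent r Pf dep N hdep_ne hcard v
  -- index function
  have hidx' : ∀ v : V, ∃ i : ℕ, v ∈ Pf → (i < n ∧ p i = v) := by
    intro v
    by_cases hv : v ∈ Pf
    · rw [hPf_def] at hv
      obtain ⟨i, hi, hpi⟩ := Finset.mem_image.mp hv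
      exact ⟨i, fun _ => ⟨Finset.mem_range.mp hi, hpi⟩⟩
    · exact ⟨0, fun h => absurd h hv⟩
  choose idx hidx using hidx'
  -- reduce to constructing f
  suffices H : ∃ f : V → ℝ, (∀ v, f v ∈ Set.Ioo (L v) (U v)) ∧
      (∀ v, ∃ w, w ≠ v ∧ f w = f v) by
    obtain ⟨f, hf1, hf2⟩ := H
    exact assemble L U f hf1 hf2
  -- helper: f-value computations
  have hmod_self : ∀ i, i % n % n = i % n := fun i => Nat.mod_mod_of_dvd _ dvd_rfl
  by_cases hB : ∃ j, j < n ∧ S (p j)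
  · -- CASE 1 : some bonus vertex on the cycle
    obtain ⟨j, hjn, hSj⟩ := hB
    have Hex : ∀ i, ∃ t, 0 < t ∧ t ≤ n ∧ S (p (i + n - t)) := by
      intro i
      by_cases ha : (i + n - j) % n = 0
      · refine ⟨n, by omega, le_refl n, ?_⟩
        obtain ⟨q, hq⟩ := Nat.dvd_of_mod_eq_zero ha
        have hiq : i + n = j + n * q := by omega
        have hmod : i % n = j % n := by
          have h1 : (i + n) % n = (j + n * q) % n := by rw [hiq]
          rwa [Nat.add_mod_right, Nat.add_mul_mod_self_left] at h1
        have harg : i + n - n = i := by omega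
        rw [harg, hp_congr i j hmod]
        exact hSj
      · set t := (i + n - j) % n with ht_def
        have htn : t < n := Nat.mod_lt _ (by omega)
        have htpos : 0 < t := Nat.pos_of_ne_zero ha
        refine ⟨t, htpos, by omega, ?_⟩
        have hq := Nat.div_add_mod (i + n - j) n
        have heq : i + n - t = j + n * ((i + n - j) / n) := by
          have hmodle : t ≤ i + n - j := Nat.mod_le _ _
          omega
        have : p (i + n - t) = p j := by
          rw [heq]
          apply hp_congr
          exact Nat.add_mul_mod_self_left j n _
        rw [this]
        exact hSj
    set u : ℕ → ℕ := fun i => Nat.find (Hex i) with hu_def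
    have hu_spec : ∀ i, 0 < u i ∧ u i ≤ n ∧ S (p (i + n - u i)) := fun i => Nat.find_spec (Hex i)
    have hu_le : ∀ i t, 0 < t → t ≤ n → S (p (i + n - t)) → u i ≤ t :=
      fun i t h1 h2 h3 => Nat.find_min' (Hex i) ⟨h1, h2, h3⟩
    have hu_min : ∀ i t, t < u i → ¬(0 < t ∧ t ≤ n ∧ S (p (i + n - t))) :=
      fun i t ht => Nat.find_min (Hex i) ht
    have hS_congr : ∀ a b t, a % n = b % n → t ≤ n → S (p (a + n - t)) → S (p (b + n - t)) := by
      intro a b t hab ht hs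
      have hpe : p (a + n - t) = p (b + n - t) := by
        apply hp_congr
        have h1 : a + n - t = a + (n - t) := by omega
        have h2 : b + n - t = b + (n - t) := by omega
        rw [h1, h2, Nat.add_mod a, Nat.add_mod b, hab]
      rw [← hpe]
      exact hs
    have hu_congr : ∀ a b, a % n = b % n → u a = u b := by
      intro a b hab
      apply le_antisymm
      · exact hu_le a (u b) (hu_spec b).1 (hu_spec b).2.1
          (hS_congr b a _ hab.symm (hu_spec b).2.1 (hu_spec b).2.2)
      · exact hu_le b (u a) (hu_spec a).1 (hu_spec a).2.1
          (hS_congr a b _ hab (hu_spec a).2.1 (hu_spec a).2.2)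
    have hu2 : ∀ i, ¬ S (p i) → u i ≤ n - 1 := by
      intro i hSi
      by_contra hgt
      have hun : u i = n := by have := (hu_spec i).2.1; omega
      have hs := (hu_spec i).2.2
      rw [hun] at hs
      have harg : i + n - n = i := by omega
      rw [harg] at hs
      exact hSi hs
    have hu_S1 : ∀ i, S (p (i + n - 1)) → u i = 1 := by
      intro i hs
      have h1 := hu_le i 1 one_pos (by omega) hs
      have h2 := (hu_spec i).1
      omega
    have hu_succ : ∀ i, ¬ S (p i) → u (i + 1) = u i + 1 := by
      intro i hSi
      have hle : u (i+1) ≤ u i + 1 := by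
        apply hu_le
        · omega
        · have := hu2 i hSi; omega
        · have harg : i + 1 + n - (u i + 1) = i + n - u i := by
            have := (hu_spec i).2.1; omega
          rw [harg]
          exact (hu_spec i).2.2
      have hge : u i + 1 ≤ u (i+1) := by
        by_contra hlt
        have h1 := (hu_spec (i+1)).1
        have h2 := (hu_spec (i+1)).2.1
        have h3 := (hu_spec (i+1)).2.2
        by_cases h1' : u (i+1) = 1
        · rw [h1'] at h3
          have harg : i + 1 + n - 1 = i + n := by omega
          rw [harg, hp_congr _ _ (Nat.add_mod_right i n)] at h3
          exact hSi h3
        · have hmin := hu_min i (u (i+1) - 1) (by omega)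
          apply hmin
          refine ⟨by omega, by omega, ?_⟩
          have harg : i + n - (u (i+1) - 1) = i + 1 + n - u (i+1) := by omega
          rw [harg]
          exact h3
      omega
    set f : V → ℝ := fun v =>
      if v ∈ Pf then
        (if S v then pw v else if u (idx v) % 2 = 1 then pw (p (idx v + 1)) else pw v)
      else (if S v then pw v else pw (parent v)) with hf_def
    have hfP_S : ∀ v, v ∈ Pf → S v → f v = pw v := by
      intro v hv hs
      simp only [hf_def]
      rw [if_pos hv, if_pos hs]
    have hfP_odd : ∀ v, v ∈ Pf → ¬ S v → u (idx v) % 2 = 1 → f v = pw (p (idx v + 1)) := by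
      intro v hv hs ho
      simp only [hf_def]
      rw [if_pos hv, if_neg hs, if_pos ho]
    have hfP_even : ∀ v, v ∈ Pf → ¬ S v → ¬(u (idx v) % 2 = 1) → f v = pw v := by
      intro v hv hs ho
      simp only [hf_def]
      rw [if_pos hv, if_neg hs, if_neg ho]
    have hfT_S : ∀ v, v ∉ Pf → S v → f v = pw v := by
      intro v hv hs
      simp only [hf_def]
      rw [if_neg hv, if_pos hs]
    have hfT : ∀ v, v ∉ Pf → ¬ S v → f v = pw (parent v) := by
      intro v hv hs
      simp only [hf_def]
      rw [if_neg hv, if_neg hs]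
    refine ⟨f, ?_, ?_⟩
    · -- validity
      intro v
      by_cases hv : v ∈ Pf
      · by_cases hSv : S v
        · rw [hfP_S v hv hSv]; exact hpw v
        · by_cases hodd : u (idx v) % 2 = 1
          · rw [hfP_odd v hv hSv hodd]
            have := hp_edge (idx v)
            rwa [(hidx v hv).2] at this
          · rw [hfP_even v hv hSv hodd]; exact hpw v
      · by_cases hSv : S v
        · rw [hfT_S v hv hSv]; exact hpw v
        · rw [hfT v hv hSv]
          apply hedge
          intro h
          rw [h] at hv
          exact hv hr_mem
    · -- partner
      intro v
      by_cases hv : v ∈ Pf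
      · by_cases hSv : S v
        · obtain ⟨c, hc1, hc2, hc3, hc4⟩ := (hS_iff v).mp hSv
          refine ⟨c, ?_, ?_⟩
          · intro h; subst h; exact hc2 (hparent_fix c hc1)
          · rw [hfT c hc3 hc4, hc1, hfP_S v hv hSv]
        · have hiv := hidx v hv
          set i := idx v with hi_def
          by_cases hodd : u i % 2 = 1
          · refine ⟨p (i + 1), ?_, ?_⟩
            · intro h
              rw [← hiv.2] at h
              have hmod := hp_inj _ _ h
              have hii : i % n = i := Nat.mod_eq_of_lt hiv.1
              rcases Nat.lt_or_ge (i+1) n with h1 | h1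
              · rw [Nat.mod_eq_of_lt h1, hii] at hmod; omega
              · have hin : i + 1 = n := by omega
                rw [hin, Nat.mod_self, hii] at hmod
                omega
            · have hfv : f v = pw (p (i + 1)) := hfP_odd v hv hSv hodd
              rw [hfv]
              by_cases hSw : S (p (i+1))
              · exact hfP_S _ (hp_mem _) hSw
              · have hidw := hidx (p (i+1)) (hp_mem _)
                have hcong : idx (p (i+1)) % n = (i+1) % n := hp_inj _ _ hidw.2
                have huu : u (idx (p (i+1))) = u (i+1) := hu_congr _ _ hcong
                have hsucc : u (i+1) = u i + 1 := by
                  apply hu_succ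
                  rw [hiv.2]
                  exact hSv
                have heven : ¬(u (idx (p (i+1))) % 2 = 1) := by omega
                exact hfP_even _ (hp_mem _) hSw heven
          · refine ⟨p (i + n - 1), ?_, ?_⟩
            · intro h
              rw [← hiv.2] at h
              have hmod := hp_inj _ _ h
              have hii : i % n = i := Nat.mod_eq_of_lt hiv.1
              rcases Nat.eq_zero_or_pos i with hz | hpos
              · rw [hz] at hmod
                have harg : (0 + n - 1) % n = n - 1 := by
                  rw [show 0 + n - 1 = n - 1 by omega]
                  exact Nat.mod_eq_of_lt (by omega)
                rw [harg, Nat.zero_mod] at hmod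
                omega
              · have harg : i + n - 1 = (i - 1) + n := by omega
                rw [harg, Nat.add_mod_right, Nat.mod_eq_of_lt (by omega), hii] at hmod
                omega
            · have hSw : ¬ S (p (i + n - 1)) := by
                intro hs
                have := hu_S1 i hs
                omega
              have hfv : f v = pw v := hfP_even v hv hSv hodd
              rw [hfv]
              have hidw := hidx (p (i + n - 1)) (hp_mem _)
              have hcong : idx (p (i + n - 1)) % n = (i + n - 1) % n := hp_inj _ _ hidw.2
              have huu : u (idx (p (i + n - 1))) = u (i + n - 1) := hu_congr _ _ hcong
              have h1 : u (i + n - 1 + 1) = u (i + n - 1) + 1 := hu_succ _ hSw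
              have h2 : i + n - 1 + 1 = i + n := by omega
              rw [h2] at h1
              have h3 : u (i + n) = u i := hu_congr _ _ (Nat.add_mod_right i n)
              have hui_pos := (hu_spec i).1
              have hodd' : u (idx (p (i + n - 1))) % 2 = 1 := by omega
              rw [hfP_odd _ (hp_mem _) hSw hodd']
              rw [← hiv.2]
              congr 1
              apply hp_congr
              have hch : (idx (p (i + n - 1)) + 1) % n = (i + n - 1 + 1) % n := by
                rw [Nat.add_mod _ 1, Nat.add_mod (i + n - 1) 1, hcong]
              rw [hch, h2, Nat.add_mod_right]
      · by_cases hSv : S v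
        · obtain ⟨c, hc1, hc2, hc3, hc4⟩ := (hS_iff v).mp hSv
          refine ⟨c, ?_, ?_⟩
          · intro h; subst h; exact hc2 (hparent_fix c hc1)
          · rw [hfT c hc3 hc4, hc1, hfT_S v hv hSv]
        · have hvr : v ≠ r := fun h => hv (h ▸ hr_mem)
          refine ⟨parent v, ?_, ?_⟩
          · intro h; exact hvr (hparent_fix v h)
          · have hSw : S (parent v) := (hS_iff (parent v)).mpr ⟨v, rfl, hvr, hv, hSv⟩
            have hfw : f (parent v) = pw (parent v) := by
              by_cases hw : parent v ∈ Pf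
              · exact hfP_S _ hw hSw
              · exact hfT_S _ hw hSw
            rw [hfw, hfT v hv hSv]
  · -- CASE 2/3 : no bonus on the cycle
    have hnoS : ∀ w, w ∈ Pf → ¬ S w := by
      intro w hw hs
      rw [hPf_def] at hw
      obtain ⟨i, hi, rfl⟩ := Finset.mem_image.mp hw
      exact hB ⟨i, Finset.mem_range.mp hi, hs⟩
    by_cases hpar : dep m % 2 = 1
    · -- CASE 2: n even, parity rule
      set f : V → ℝ := fun v =>
        if v ∈ Pf then (if dep v % 2 = 0 then pw v else pw (parent v))
        else (if S v then pw v else pw (parent v)) with hf_def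
      have hfP0 : ∀ v, v ∈ Pf → dep v % 2 = 0 → f v = pw v := by
        intro v hv h0
        simp only [hf_def]
        rw [if_pos hv, if_pos h0]
      have hfP1 : ∀ v, v ∈ Pf → ¬(dep v % 2 = 0) → f v = pw (parent v) := by
        intro v hv h0
        simp only [hf_def]
        rw [if_pos hv, if_neg h0]
      have hfT_S : ∀ v, v ∉ Pf → S v → f v = pw v := by
        intro v hv hs
        simp only [hf_def]
        rw [if_neg hv, if_pos hs]
      have hfT : ∀ v, v ∉ Pf → ¬ S v → f v = pw (parent v) := by
        intro v hv hs
        simp only [hf_def]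
        rw [if_neg hv, if_neg hs]
      refine ⟨f, ?_, ?_⟩
      · intro v
        by_cases hv : v ∈ Pf
        · by_cases h0 : dep v % 2 = 0
          · rw [hfP0 v hv h0]; exact hpw v
          · rw [hfP1 v hv h0]
            apply hedge
            intro h
            rw [h, hdep_r] at h0
            exact h0 rfl
        · by_cases hSv : S v
          · rw [hfT_S v hv hSv]; exact hpw v
          · rw [hfT v hv hSv]
            apply hedge
            intro h
            rw [h] at hv
            exact hv hr_mem
      · intro v
        by_cases hv : v ∈ Pf
        · have hiv := hidx v hv
          set i := idx v with hi_def
          have hdv : dep v = dep m - i := by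
            have h := hdep_p i
            rw [Nat.mod_eq_of_lt hiv.1] at h
            rw [← hiv.2]
            exact h
          have hile : i ≤ dep m := by omega
          by_cases h0 : dep v % 2 = 0
          · -- i odd, i ≥ 1 ; partner = p (i-1)
            have hipos : 1 ≤ i := by omega
            refine ⟨p (i - 1), ?_, ?_⟩
            · intro h
              rw [← hiv.2] at h
              have hmod := hp_inj _ _ h
              rw [Nat.mod_eq_of_lt (show i - 1 < n by omega),
                Nat.mod_eq_of_lt hiv.1] at hmod
              omega
            · have hpar_w : parent (p (i - 1)) = v := by
                have h := hp_parent (i - 1)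
                  (by rw [Nat.mod_eq_of_lt (show i - 1 < n by omega)]; omega)
                rw [show i - 1 + 1 = i by omega] at h
                rw [← h, hiv.2]
              have hdw : dep (p (i - 1)) = dep m - (i - 1) := by
                have h := hdep_p (i - 1)
                rw [Nat.mod_eq_of_lt (show i - 1 < n by omega)] at h
                exact h
              have h1 : ¬(dep (p (i - 1)) % 2 = 0) := by omega
              rw [hfP1 _ (hp_mem _) h1, hpar_w, hfP0 v hv h0]
          · -- i < dep m ; partner = parent v = p (i+1)
            have hlt : i < dep m := by omega
            have hpv : p (i + 1) = parent v := by
              rw [← hiv.2]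
              exact hp_parent i (by rw [Nat.mod_eq_of_lt hiv.1]; omega)
            have hvr : v ≠ r := by
              intro h
              rw [h, hdep_r] at h0
              exact h0 rfl
            refine ⟨parent v, ?_, ?_⟩
            · intro h
              exact hvr (hparent_fix v h)
            · have hdw : dep (parent v) = dep m - (i + 1) := by
                have h := hdep_p (i + 1)
                rw [Nat.mod_eq_of_lt (show i + 1 < n by omega)] at h
                rw [← hpv]
                exact h
              have h1 : dep (parent v) % 2 = 0 := by omega
              have hfw : f (parent v) = pw (parent v) := by
                rw [← hpv]
                rw [← hpv] at h1
                exact hfP0 _ (hp_mem _) h1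
              rw [hfw, hfP1 v hv h0]
        · by_cases hSv : S v
          · obtain ⟨c, hc1, hc2, hc3, hc4⟩ := (hS_iff v).mp hSv
            refine ⟨c, ?_, ?_⟩
            · intro h; subst h; exact hc2 (hparent_fix c hc1)
            · rw [hfT c hc3 hc4, hc1, hfT_S v hv hSv]
          · have hvr : v ≠ r := fun h => hv (h ▸ hr_mem)
            refine ⟨parent v, ?_, ?_⟩
            · intro h; exact hvr (hparent_fix v h)
            · have hSw : S (parent v) := (hS_iff (parent v)).mpr ⟨v, rfl, hvr, hv, hSv⟩
              have hw : parent v ∉ Pf := fun h => hnoS _ h hSw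
              rw [hfT_S _ hw hSw, hfT v hv hSv]
    · -- CASE 3: n odd, geometric triple
      have hnodd : n % 2 = 1 := by omega
      have hn3 : 3 ≤ n := by omega
      obtain ⟨j, hjmem, hjmin⟩ := Finset.exists_min_image (Finset.range n)
        (fun i => U (p i)) ⟨0, Finset.mem_range.mpr (by omega)⟩
      set q : ℕ → V := fun t => p (j + 1 + t) with hq_def
      have hq_mem : ∀ t, q t ∈ Pf := fun t => hp_mem _
      have hq_inj : ∀ a b, a < n → b < n → q a = q b → a = b := by
        intro a b ha hb h
        have h2 : (j + 1 + a) % n = (j + 1 + b) % n := hp_inj _ _ h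
        have h3 : a ≡ b [MOD n] := Nat.ModEq.add_left_cancel' (j + 1) h2
        rwa [Nat.ModEq, Nat.mod_eq_of_lt ha, Nat.mod_eq_of_lt hb] at h3
      have hq_edge : ∀ t, pw (q (t+1)) ∈ Set.Ioo (L (q t)) (U (q t)) := by
        intro t
        have h := hp_edge (j + 1 + t)
        have harg : j + 1 + (t + 1) = j + 1 + t + 1 := by omega
        simp only [hq_def]
        rw [harg]
        exact h
      have hqn0 : q n = q 0 := by
        simp only [hq_def]
        apply hp_congr
        have harg : j + 1 + n = (j + 1 + 0) + n := by omega
        rw [harg, Nat.add_mod_right]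
      have hq1 : q (n - 1) = p j := by
        simp only [hq_def]
        apply hp_congr
        have harg : j + 1 + (n - 1) = j + n := by omega
        rw [harg, Nat.add_mod_right, Nat.mod_eq_of_lt (Finset.mem_range.mp hjmem)]
      have hq_min : ∀ t, U (q (n-1)) ≤ U (q t) := by
        intro t
        rw [hq1]
        have h2 : q t = p ((j + 1 + t) % n) := (hp_congr _ _ (hmod_self _)).symm
        rw [h2]
        exact hjmin _ (Finset.mem_range.mpr (Nat.mod_lt _ (by omega)))
      have htix' : ∀ v : V, ∃ t : ℕ, v ∈ Pf → (t < n ∧ q t = v) := by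
        intro v
        by_cases hv : v ∈ Pf
        · rw [hPf_def] at hv
          obtain ⟨i, hi', rfl⟩ := Finset.mem_image.mp hv
          have hi := Finset.mem_range.mp hi'
          set a := (j + 1) % n with ha_def
          have han : a < n := Nat.mod_lt _ (by omega)
          refine ⟨(i + n - a) % n, fun _ => ⟨Nat.mod_lt _ (by omega), ?_⟩⟩
          simp only [hq_def]
          apply hp_congr
          have hadd_mod : (j + 1 + (i + n - a) % n) % n = (j + 1 + (i + n - a)) % n := by
            rw [Nat.add_mod (j+1) ((i + n - a) % n), hmod_self, ← Nat.add_mod]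
          rw [hadd_mod]
          obtain ⟨qq, hqq⟩ : ∃ qq, j + 1 - a = n * qq :=
            ⟨(j+1)/n, by have := Nat.div_add_mod (j+1) n; omega⟩
          have hle : a ≤ j + 1 := Nat.mod_le _ _
          have hre : j + 1 + (i + n - a) = i + n * qq + n := by omega
          rw [hre, Nat.add_mod_right, Nat.add_mul_mod_self_left]
        · exact ⟨0, fun h => absurd h hv⟩
      choose tix htix using htix'
      have htix_val : ∀ t, t < n → tix (q t) = t := by
        intro t ht
        have h := htix (q t) (hq_mem t)
        exact hq_inj _ _ h.1 ht h.2
      set x : ℝ := (max (max (L (q 0)) (L (q (n-2)))) (L (q (n-1))) + U (q (n-1))) / 2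
        with hx_def
      have hb0 : pw (q 0) ∈ Set.Ioo (L (q (n-1))) (U (q (n-1))) := by
        have h := hq_edge (n-1)
        rw [show n - 1 + 1 = n by omega, hqn0] at h
        exact h
      have hb2 : L (q (n-2)) < pw (q (n-1)) ∧ pw (q (n-1)) < U (q (n-2)) := by
        have h := hq_edge (n-2)
        rw [show n - 2 + 1 = n - 1 by omega] at h
        exact ⟨h.1, h.2⟩
      have hmaxlt : max (max (L (q 0)) (L (q (n-2)))) (L (q (n-1))) < U (q (n-1)) := by
        apply max_lt (max_lt ?_ ?_) ?_
        · exact lt_trans (hpw (q 0)).1 hb0.2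
        · exact lt_trans hb2.1 (hpw (q (n-1))).2
        · exact lt_trans (hpw (q (n-1))).1 (hpw (q (n-1))).2
      have hx_lb : max (max (L (q 0)) (L (q (n-2)))) (L (q (n-1))) < x := by
        rw [hx_def]; linarith
      have hx_ub : x < U (q (n-1)) := by
        rw [hx_def]; linarith
      have hx0 : x ∈ Set.Ioo (L (q 0)) (U (q 0)) :=
        ⟨lt_of_le_of_lt ((le_max_left _ _).trans (le_max_left _ _)) hx_lb,
         lt_of_lt_of_le hx_ub (hq_min 0)⟩
      have hx2 : x ∈ Set.Ioo (L (q (n-2))) (U (q (n-2))) :=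
        ⟨lt_of_le_of_lt ((le_max_right _ _).trans (le_max_left _ _)) hx_lb,
         lt_of_lt_of_le hx_ub (hq_min (n-2))⟩
      have hx1 : x ∈ Set.Ioo (L (q (n-1))) (U (q (n-1))) :=
        ⟨lt_of_le_of_lt (le_max_right _ _) hx_lb, hx_ub⟩
      set f : V → ℝ := fun v =>
        if v ∈ Pf then
          (if tix v = 0 ∨ n - 2 ≤ tix v then x
           else if tix v % 2 = 1 then pw (q (tix v + 1)) else pw v)
        else (if S v then pw v else pw (parent v)) with hf_def
      have hfTR : ∀ v, v ∈ Pf → (tix v = 0 ∨ n - 2 ≤ tix v) → f v = x := by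
        intro v hv h0
        simp only [hf_def]
        rw [if_pos hv, if_pos h0]
      have hfO : ∀ v, v ∈ Pf → ¬(tix v = 0 ∨ n - 2 ≤ tix v) → tix v % 2 = 1 →
          f v = pw (q (tix v + 1)) := by
        intro v hv h0 h1
        simp only [hf_def]
        rw [if_pos hv, if_neg h0, if_pos h1]
      have hfE : ∀ v, v ∈ Pf → ¬(tix v = 0 ∨ n - 2 ≤ tix v) → ¬(tix v % 2 = 1) →
          f v = pw v := by
        intro v hv h0 h1
        simp only [hf_def]
        rw [if_pos hv, if_neg h0, if_neg h1]
      have hfT_S : ∀ v, v ∉ Pf → S v → f v = pw v := by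
        intro v hv hs
        simp only [hf_def]
        rw [if_neg hv, if_pos hs]
      have hfT : ∀ v, v ∉ Pf → ¬ S v → f v = pw (parent v) := by
        intro v hv hs
        simp only [hf_def]
        rw [if_neg hv, if_neg hs]
      refine ⟨f, ?_, ?_⟩
      · intro v
        by_cases hv : v ∈ Pf
        · have hiv := htix v hv
          by_cases h0 : tix v = 0 ∨ n - 2 ≤ tix v
          · rw [hfTR v hv h0]
            rcases h0 with h0 | h0
            · rw [← hiv.2, h0]; exact hx0
            · have : tix v = n - 2 ∨ tix v = n - 1 := by
                have := hiv.1; omega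
              rcases this with h1 | h1
              · rw [← hiv.2, h1]; exact hx2
              · rw [← hiv.2, h1]; exact hx1
          · by_cases h1 : tix v % 2 = 1
            · rw [hfO v hv h0 h1]
              have h := hq_edge (tix v)
              rwa [hiv.2] at h
            · rw [hfE v hv h0 h1]; exact hpw v
        · by_cases hSv : S v
          · rw [hfT_S v hv hSv]; exact hpw v
          · rw [hfT v hv hSv]
            apply hedge
            intro h
            rw [h] at hv
            exact hv hr_mem
      · intro v
        by_cases hv : v ∈ Pf
        · have hiv := htix v hv
          by_cases h0 : tix v = 0 ∨ n - 2 ≤ tix v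
          · by_cases hz : tix v = 0
            · refine ⟨q (n - 1), ?_, ?_⟩
              · intro h
                have h3 : q 0 = v := by rw [← hz]; exact hiv.2
                have h2 : q (n-1) = q 0 := h.trans h3.symm
                have := hq_inj (n - 1) 0 (by omega) (by omega) h2
                omega
              · have htv : tix (q (n-1)) = n - 1 := htix_val _ (by omega)
                rw [hfTR _ (hq_mem _) (by rw [htv]; omega), hfTR v hv h0]
            · refine ⟨q 0, ?_, ?_⟩
              · intro h
                have := hq_inj 0 (tix v) (by omega) hiv.1 (h.trans hiv.2.symm)
                omega
              · have htv : tix (q 0) = 0 := htix_val _ (by omega)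
                rw [hfTR _ (hq_mem _) (by rw [htv]; omega), hfTR v hv h0]
          · have hrange : 1 ≤ tix v ∧ tix v ≤ n - 3 := by
              have := hiv.1; omega
            by_cases h1 : tix v % 2 = 1
            · refine ⟨q (tix v + 1), ?_, ?_⟩
              · intro h
                have := hq_inj (tix v + 1) (tix v) (by omega) hiv.1 (h.trans hiv.2.symm)
                omega
              · have hle : tix v + 1 ≤ n - 3 := by omega
                have htv : tix (q (tix v + 1)) = tix v + 1 := htix_val _ (by omega)
                rw [hfE _ (hq_mem _) (by rw [htv]; omega) (by rw [htv]; omega),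
                  hfO v hv h0 h1]
            · refine ⟨q (tix v - 1), ?_, ?_⟩
              · intro h
                have := hq_inj (tix v - 1) (tix v) (by omega) hiv.1 (h.trans hiv.2.symm)
                omega
              · have h2 : 2 ≤ tix v := by omega
                have htv : tix (q (tix v - 1)) = tix v - 1 := htix_val _ (by omega)
                rw [hfO _ (hq_mem _) (by rw [htv]; omega) (by rw [htv]; omega)]
                rw [htv, show tix v - 1 + 1 = tix v by omega, hiv.2,
                  hfE v hv h0 h1]
        · by_cases hSv : S v
          · obtain ⟨c, hc1, hc2, hc3, hc4⟩ := (hS_iff v).mp hSv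
            refine ⟨c, ?_, ?_⟩
            · intro h; subst h; exact hc2 (hparent_fix c hc1)
            · rw [hfT c hc3 hc4, hc1, hfT_S v hv hSv]
          · have hvr : v ≠ r := fun h => hv (h ▸ hr_mem)
            refine ⟨parent v, ?_, ?_⟩
            · intro h; exact hvr (hparent_fix v h)
            · have hSw : S (parent v) := (hS_iff (parent v)).mpr ⟨v, rfl, hvr, hv, hSv⟩
              have hw : parent v ∉ Pf := fun h => hnoS _ h hSw
              rw [hfT_S _ hw hSw, hfT v hv hSv]
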